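/- Let k be a Gaussian integer with |k| > 1, and define the sequence W by W_0 = 1, W_1 = 4k^2 - k - 2, W_{m+2} = 2(4k^2-2k-1)·W_{m+1} - W_m. Then |W_m| ≥ (8|k|^2 - 4|k| - 3)^{m-1} for all m ≥ 1, and the sequence (|W_m|) is strictly increasing. -/

import Mathlib

open GaussianInt

theorem W_growth (k : GaussianInt) (hk : 1 < ‖(k : ℂ)‖) (W : ℕ → GaussianInt)
    (hW0 : W 0 = 1) (hW1 : W 1 = 4 * k ^ 2 - k - 2)
    (hWrec : ∀ m, W (m + 2) = 2 * (4 * k ^ 2 - 2 * k - 1) * W (m + 1) - W m) :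
    (∀ m : ℕ, 1 ≤ m →
      (8 * ‖(k : ℂ)‖ ^ 2 - 4 * ‖(k : ℂ)‖ - 3) ^ (m - 1) ≤
        ‖(W m : ℂ)‖) ∧
    StrictMono (fun m : ℕ => ‖(W m : ℂ)‖) := by
  set a := ‖(k : ℂ)‖ with ha
  set c := 8 * a ^ 2 - 4 * a - 3 with hc
  have hc1 : 1 < c := by nlinarith
  have habsW0 : ‖(W 0 : ℂ)‖ = 1 := by rw [hW0]; simp
  have habsW1 : 1 < ‖(W 1 : ℂ)‖ := by
    have h1 : 4 * a ^ 2 - a - 2 ≤ ‖(W 1 : ℂ)‖ := by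
      have hcast : ((W 1 : GaussianInt) : ℂ) = 4 * (k : ℂ) ^ 2 - (k : ℂ) - 2 := by
        rw [hW1]; simp [map_mul, map_sub, map_pow, map_ofNat]
      rw [hcast]
      have t1 : ‖4 * (k : ℂ) ^ 2 - (k : ℂ)‖ - ‖(2 : ℂ)‖ ≤
          ‖4 * (k : ℂ) ^ 2 - (k : ℂ) - 2‖ := norm_sub_norm_le _ _
      have t2 : ‖4 * (k : ℂ) ^ 2‖ - ‖(k : ℂ)‖ ≤
          ‖4 * (k : ℂ) ^ 2 - (k : ℂ)‖ := norm_sub_norm_le _ _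
      have t3 : ‖4 * (k : ℂ) ^ 2‖ = 4 * a ^ 2 := by
        simp [map_mul, map_pow, ha]
      have t4 : ‖(2 : ℂ)‖ = 2 := by simp
      linarith
    nlinarith
  have key : ∀ m : ℕ, ‖(W m : ℂ)‖ < ‖(W (m + 1) : ℂ)‖ ∧
      c ^ m ≤ ‖(W (m + 1) : ℂ)‖ := by
    intro m
    induction m with
    | zero => exact ⟨by rw [habsW0]; exact habsW1, by simpa using habsW1.le⟩
    | succ n ih =>
      obtain ⟨ih1, ih2⟩ := ih
      have hpos : 0 < ‖(W (n + 1) : ℂ)‖ :=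
        lt_of_lt_of_le (pow_pos (by linarith) n) ih2
      have hcast : ((W (n + 2) : GaussianInt) : ℂ) =
          2 * (4 * (k : ℂ) ^ 2 - 2 * (k : ℂ) - 1) * ((W (n + 1) : GaussianInt) : ℂ)
            - ((W n : GaussianInt) : ℂ) := by
        rw [hWrec n]; simp [map_mul, map_sub, map_pow, map_ofNat, map_one]
      have hcoef : 8 * a ^ 2 - 4 * a - 2 ≤
          ‖2 * (4 * (k : ℂ) ^ 2 - 2 * (k : ℂ) - 1)‖ := by
        have t2 : ‖4 * (k : ℂ) ^ 2 - 2 * (k : ℂ)‖ - ‖(1 : ℂ)‖ ≤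
            ‖4 * (k : ℂ) ^ 2 - 2 * (k : ℂ) - 1‖ := norm_sub_norm_le _ _
        have t3 : ‖4 * (k : ℂ) ^ 2‖ - ‖2 * (k : ℂ)‖ ≤
            ‖4 * (k : ℂ) ^ 2 - 2 * (k : ℂ)‖ := norm_sub_norm_le _ _
        have t4 : ‖4 * (k : ℂ) ^ 2‖ = 4 * a ^ 2 := by
          simp [map_mul, map_pow, ha]
        have t5 : ‖2 * (k : ℂ)‖ = 2 * a := by simp [map_mul, ha]
        have t6 : ‖2 * (4 * (k : ℂ) ^ 2 - 2 * (k : ℂ) - 1)‖ =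
            2 * ‖4 * (k : ℂ) ^ 2 - 2 * (k : ℂ) - 1‖ := by
          simp [map_mul]
        simp only [norm_one] at t2
        rw [t6]; linarith
    -- |W (n+2)| ≥ |coef| * |W(n+1)| - |W n|
      have hmain : (8 * a ^ 2 - 4 * a - 2) * ‖(W (n + 1) : ℂ)‖
          - ‖(W n : ℂ)‖ ≤ ‖(W (n + 2) : ℂ)‖ := by
        rw [hcast]
        have t1 : ‖2 * (4 * (k : ℂ) ^ 2 - 2 * (k : ℂ) - 1) * ((W (n + 1) : GaussianInt) : ℂ)‖
            - ‖(W n : ℂ)‖ ≤ _ := norm_sub_norm_le _ ((W n : ℂ))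
        rw [norm_mul] at t1
        nlinarith [hpos, hcoef, t1]
      have hstep : c * ‖(W (n + 1) : ℂ)‖ ≤ ‖(W (n + 2) : ℂ)‖ := by
        have : c * ‖(W (n + 1) : ℂ)‖ ≤
            (8 * a ^ 2 - 4 * a - 2) * ‖(W (n + 1) : ℂ)‖ - ‖(W n : ℂ)‖ := by
          rw [hc]; nlinarith [ih1.le, hpos]
        linarith
      constructor
      · calc ‖(W (n + 1) : ℂ)‖ < c * ‖(W (n + 1) : ℂ)‖ := by
              nlinarith
          _ ≤ _ := hstep
      · calc c ^ (n + 1) = c * c ^ n := by ring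
          _ ≤ c * ‖(W (n + 1) : ℂ)‖ := by nlinarith
          _ ≤ _ := hstep
  constructor
  · intro m hm
    obtain ⟨n, rfl⟩ := Nat.exists_eq_add_of_le hm
    simpa [Nat.add_comm] using (key n).2
  · exact strictMono_nat_of_lt_succ fun n => (key n).1
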